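/- Let A and B be 1×k_A and 1×k_B integer matrices with all entries nonzero, where k_B ≥ k_A ≥ 3. Then m(A,B) = (k_A·k_B - k_A)/(k_A·k_B - k_A - k_B), where m(A,B) is the maximum over partitions W ∪ W̄ = [k_A] with |W| ≥ 2 of |W|/(|W|-1+rank(A_{W̄})-rank(A)+1/m(B)) and m(B) = (k_B-1)/(k_B-2). -/
import Mathlib

lemma rank_one_row {n : Type*} [Fintype n] [DecidableEq n] (M : Matrix (Fin 1) n ℤ)
    (j : n) (h : M 0 j ≠ 0) : M.rank = 1 := by
  refine le_antisymm (M.rank_le_card_height.trans (by simp)) ?_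
  rw [Matrix.rank]
  rw [Nat.one_le_iff_ne_zero, ← Nat.pos_iff_ne_zero, Module.finrank_pos_iff_exists_ne_zero (R := ℤ)]
  refine ⟨⟨M.mulVecLin (Pi.single j 1), ⟨_, rfl⟩⟩, fun hz => h ?_⟩
  have hz' : M.mulVecLin (Pi.single j 1) = 0 := congrArg Subtype.val hz
  have := congrFun hz' 0
  simpa [Matrix.mulVecLin_apply, Matrix.mulVec_single] using this

/-- For 1×k_A and 1×k_B integer matrices A, B with nonzero entries and
k_B ≥ k_A ≥ 3, m(A,B) = (k_A k_B - k_A)/(k_A k_B - k_A - k_B), where m(A,B) is the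
maximum over partitions [k_A] = W ∪ W̄ with |W| ≥ 2 of
|W|/(|W|-1+rank(A_{W̄})-rank(A)+1/m(B)) and m(B) = (k_B-1)/(k_B-2). -/
theorem stmt_1 (kA kB : ℕ) (hkA : 3 ≤ kA) (hk : kA ≤ kB)
    (A : Matrix (Fin 1) (Fin kA) ℤ) (B : Matrix (Fin 1) (Fin kB) ℤ)
    (hA : ∀ j, A 0 j ≠ 0) (hB : ∀ j, B 0 j ≠ 0) :
    IsGreatest
      {x : ℚ | ∃ W : Finset (Fin kA), 2 ≤ W.card ∧
        x = (W.card : ℚ) /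
          ((W.card : ℚ) - 1 +
            ((A.submatrix id (fun j : {y // y ∈ Wᶜ} => (j : Fin kA))).rank : ℚ) -
            (A.rank : ℚ) +
            1 / (((kB : ℚ) - 1) / ((kB : ℚ) - 2)))}
      (((kA : ℚ) * kB - kA) / ((kA : ℚ) * kB - kA - kB)) := by
  have ha : (3 : ℚ) ≤ (kA : ℚ) := by exact_mod_cast hkA
  have hab : (kA : ℚ) ≤ (kB : ℚ) := by exact_mod_cast hk
  have hb : (3 : ℚ) ≤ (kB : ℚ) := le_trans ha hab
  have hb1 : (0 : ℚ) < (kB : ℚ) - 1 := by linarith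
  have hb2 : (0 : ℚ) < (kB : ℚ) - 2 := by linarith
  have hden : (0 : ℚ) < (kA : ℚ) * kB - kA - kB := by nlinarith
  have hArank : (A.rank : ℚ) = 1 := by
    rw [rank_one_row A ⟨0, by omega⟩ (hA _)]; norm_num
  have huniv : ((kA : ℚ) * kB - kA) / ((kA : ℚ) * kB - kA - kB) =
      ((Finset.univ : Finset (Fin kA)).card : ℚ) /
        (((Finset.univ : Finset (Fin kA)).card : ℚ) - 1 +
          ((A.submatrix id (fun j : {y // y ∈ (Finset.univ : Finset (Fin kA))ᶜ} =>
            (j : Fin kA))).rank : ℚ) - (A.rank : ℚ) +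
          1 / (((kB : ℚ) - 1) / ((kB : ℚ) - 2))) := by
    haveI : IsEmpty {y : Fin kA // y ∈ (Finset.univ : Finset (Fin kA))ᶜ} :=
      ⟨fun y => by simpa using y.2⟩
    have h0 : (A.submatrix id (fun j : {y // y ∈ (Finset.univ : Finset (Fin kA))ᶜ} =>
        (j : Fin kA))).rank = 0 :=
      Nat.le_zero.mp ((Matrix.rank_le_card_width _).trans (le_of_eq Fintype.card_eq_zero))
    rw [h0, hArank, one_div_div, Finset.card_univ, Fintype.card_fin]
    push_cast
    have hpos2 : (0:ℚ) < (kA:ℚ) - 1 + 0 - 1 + ((kB:ℚ)-2)/((kB:ℚ)-1) := by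
      nlinarith [div_pos hb2 hb1]
    rw [div_eq_div_iff (ne_of_gt hden) (ne_of_gt hpos2)]
    field_simp
    ring
  constructor
  · exact ⟨Finset.univ, by simp [Finset.card_univ]; omega, huniv⟩
  · rintro x ⟨W, hW2, rfl⟩
    by_cases hWu : W = Finset.univ
    · subst hWu; exact le_of_eq huniv.symm
    · obtain ⟨j, hj⟩ : ∃ j, j ∉ W := by
        by_contra h; push_neg at h; exact hWu (Finset.eq_univ_iff_forall.mpr h)
      have h1 : (A.submatrix id (fun j : {y // y ∈ Wᶜ} => (j : Fin kA))).rank = 1 :=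
        rank_one_row _ ⟨j, Finset.mem_compl.mpr hj⟩ (hA j)
      have hw2 : (2 : ℚ) ≤ (W.card : ℚ) := by exact_mod_cast hW2
      rw [h1, hArank]
      push_cast
      rw [one_div_div]
      have key : (W.card : ℚ) - 1 + 1 - 1 + ((kB : ℚ) - 2) / ((kB : ℚ) - 1) =
          ((W.card : ℚ) * ((kB : ℚ) - 1) - 1) / ((kB : ℚ) - 1) := by
        field_simp; ring
      rw [key, div_div_eq_mul_div]
      have hposL : (0 : ℚ) < (W.card : ℚ) * ((kB : ℚ) - 1) - 1 := by nlinarith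
      rw [div_le_div_iff₀ hposL hden]
      have h6 : (kA : ℚ) ≤ (W.card : ℚ) * (kB : ℚ) := by nlinarith
      nlinarith [mul_nonneg (sub_nonneg.mpr h6) hb1.le]
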